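/- Let X be a Polish space and Λ an open-valued set-valued map from X to ℝ^d whose graph is coanalytic in X × ℝ^d. Then Graph(Λ) ∈ ℬ_c(X) ⊗ ℬ(ℝ^d). -/

import Mathlib

open Set MeasureTheory Filter Topology TopologicalSpace
open scoped ENNReal NNReal

/-- The universal sigma-algebra `ℬ_c(X) = ⋂_P ℬ_P(X)`: sets that are null-measurable
for every probability measure `P` on `X`. -/
def universalCompletion (X : Type*) [MeasurableSpace X] : MeasurableSpace X where
  MeasurableSet' s := ∀ P : Measure X, IsProbabilityMeasure P → NullMeasurableSet s P
  measurableSet_empty := fun P _ => MeasurableSet.empty.nullMeasurableSet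
  measurableSet_compl := fun _ hs P hP => (hs P hP).compl
  measurableSet_iUnion := fun _ hf P hP => NullMeasurableSet.iUnion (fun i => hf i P hP)

namespace CapAux

/-- The bounded set determined by a list of coordinate bounds. -/
def Bl (l : List ℕ) : Set (ℕ → ℕ) := {σ | ∀ i < l.length, σ i ≤ l.getD i 0}

lemma Bl_nil : Bl ([] : List ℕ) = univ := by
  ext σ; simp [Bl]

lemma Bl_append (l : List ℕ) (m : ℕ) :
    Bl (l ++ [m]) = Bl l ∩ {σ | σ l.length ≤ m} := by
  ext σ
  simp only [Bl, mem_setOf_eq, mem_inter_iff, List.length_append, List.length_cons,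
    List.length_nil]
  constructor
  · intro h
    refine ⟨fun i hi => ?_, ?_⟩
    · have := h i (by omega)
      rwa [List.getD_append _ _ _ _ hi] at this
    · have := h l.length (by omega)
      rwa [List.getD_append_right _ _ _ _ le_rfl, Nat.sub_self] at this
  · rintro ⟨h1, h2⟩ i hi
    rcases lt_or_ge i l.length with h | h
    · rw [List.getD_append _ _ _ _ h]; exact h1 i h
    · have : i = l.length := by omega
      subst this
      rwa [List.getD_append_right _ _ _ _ le_rfl, Nat.sub_self]

lemma Bl_iUnion (l : List ℕ) : (⋃ m, Bl (l ++ [m])) = Bl l := by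
  ext σ
  simp only [mem_iUnion, Bl_append, mem_inter_iff, mem_setOf_eq]
  exact ⟨fun ⟨m, h, _⟩ => h, fun h => ⟨σ l.length, h, le_rfl⟩⟩

lemma Bl_mono (l : List ℕ) : Monotone (fun m => Bl (l ++ [m])) := by
  intro m m' hm σ hσ
  simp only [Bl_append] at hσ ⊢
  exact ⟨hσ.1, le_trans hσ.2 hm⟩

lemma exists_le_add {a : ℝ≥0∞} {b : ℕ → ℝ≥0∞} (h : a = ⨆ m, b m) (ha : a ≠ ⊤)
    {δ : ℝ≥0∞} (hδ : δ ≠ 0) : ∃ m, a ≤ b m + δ := by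
  rcases eq_or_ne a 0 with rfl | h0
  · exact ⟨0, by simp⟩
  · have hlt : a - δ < a := ENNReal.sub_lt_self ha h0 hδ
    rw [h] at hlt
    obtain ⟨m, hm⟩ := lt_iSup_iff.1 hlt
    exact ⟨m, by rw [h] at ha ⊢; exact tsub_le_iff_right.1 hm.le⟩

end CapAux

namespace CapAux2
open CapAux PiNat

lemma exists_subset_of_isOpen {b : ℕ → ℕ} {V : Set (ℕ → ℕ)} (hV : IsOpen V)
    (hC : {σ : ℕ → ℕ | ∀ i, σ i ≤ b i} ⊆ V) :
    ∃ k, {σ : ℕ → ℕ | ∀ i < k, σ i ≤ b i} ⊆ V := by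
  have hCeq : {σ : ℕ → ℕ | ∀ i, σ i ≤ b i} = Set.pi univ fun i => Iic (b i) := by
    ext σ; simp [Set.mem_pi, Pi.le_def]
  have hCcomp : IsCompact {σ : ℕ → ℕ | ∀ i, σ i ≤ b i} := by
    rw [hCeq]; exact isCompact_univ_pi fun i => (Set.finite_Iic (b i)).isCompact
  have hcyl : ∀ σ : ℕ → ℕ, σ ∈ {σ : ℕ → ℕ | ∀ i, σ i ≤ b i} →
      ∃ n, cylinder σ n ⊆ V := by
    intro σ hσ
    obtain ⟨v, ⟨y, n, rfl⟩, hyv, hvV⟩ :=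
      (isTopologicalBasis_cylinders (fun _ : ℕ => ℕ)).exists_subset_of_mem_open (hC hσ) hV
    exact ⟨n, by rw [← mem_cylinder_iff_eq.1 hyv] at hvV; exact hvV⟩
  choose! n hn using hcyl
  obtain ⟨t, htC, hcover⟩ := hCcomp.elim_nhds_subcover (fun σ => cylinder σ (n σ))
    (fun σ hσ => (isOpen_cylinder (fun _ : ℕ => ℕ) σ (n σ)).mem_nhds (self_mem_cylinder _ _))
  refine ⟨t.sup n, fun τ hτ => ?_⟩
  set τ' : ℕ → ℕ := fun i => if i < t.sup n then τ i else 0 with hτ'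
  have hτ'C : τ' ∈ {σ : ℕ → ℕ | ∀ i, σ i ≤ b i} := by
    intro i
    simp only [hτ']
    split
    · exact hτ i ‹_›
    · exact Nat.zero_le _
  obtain ⟨σ, hσt, hmem⟩ := Set.mem_iUnion₂.1 (hcover hτ'C)
  refine hn σ (htC σ hσt) ?_
  intro i hi
  have hik : i < t.sup n := lt_of_lt_of_le hi (Finset.le_sup hσt)
  have h2 : τ' i = σ i := mem_cylinder_iff.1 hmem i hi
  have h3 : (if i < t.sup n then τ i else 0) = σ i := h2
  rwa [if_pos hik] at h3

lemma partial_geom (c : ℝ≥0∞) (k : ℕ) :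
    ∑ i ∈ Finset.range k, c * (2⁻¹ : ℝ≥0∞) ^ (i + 1) ≤ c := by
  rw [← Finset.mul_sum]
  calc c * ∑ i ∈ Finset.range k, (2⁻¹ : ℝ≥0∞) ^ (i + 1)
      ≤ c * ∑' i : ℕ, (2⁻¹ : ℝ≥0∞) ^ (i + 1) := by
        gcongr; exact ENNReal.sum_le_tsum _
    _ = c := by
        have : ∑' i : ℕ, (2⁻¹ : ℝ≥0∞) ^ (i + 1) = 1 := by
          simp_rw [pow_succ]
          rw [ENNReal.tsum_mul_right, ENNReal.tsum_geometric, ENNReal.one_sub_inv_two,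
            inv_inv, two_mul, ENNReal.inv_two_add_inv_two]
        rw [this, mul_one]

theorem analyticSet_exists_isCompact_le {α : Type*} [TopologicalSpace α] [T2Space α]
    [MeasurableSpace α] [OpensMeasurableSpace α] {s : Set α} (hs : AnalyticSet s)
    (μ : Measure α) [IsFiniteMeasure μ] [μ.OuterRegular] {ε : ℝ≥0∞} (hε : ε ≠ 0) :
    ∃ K, IsCompact K ∧ K ⊆ s ∧ μ s ≤ μ K + ε := by
  rcases eq_or_ne ε ⊤ with rfl | hεtop
  · exact ⟨∅, isCompact_empty, empty_subset _, by simp⟩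
  rw [AnalyticSet] at hs
  rcases hs with rfl | ⟨f, fcont, rfl⟩
  · exact ⟨∅, isCompact_empty, empty_subset _, by simp⟩
  have hε2 : ε / 2 ≠ 0 := by
    simp only [ne_eq, ENNReal.div_eq_zero_iff]; push_neg
    exact ⟨hε, by norm_num⟩
  set δ : ℕ → ℝ≥0∞ := fun i => ε / 2 * (2⁻¹ : ℝ≥0∞) ^ (i + 1) with hδdef
  have hδ0 : ∀ i, δ i ≠ 0 := by
    intro i
    simp only [hδdef, ne_eq, mul_eq_zero, not_or]
    exact ⟨hε2, pow_ne_zero _ (by norm_num)⟩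
  have key : ∀ l : List ℕ, ∃ m, μ (f '' Bl l) ≤ μ (f '' Bl (l ++ [m])) + δ l.length := by
    intro l
    refine exists_le_add ?_ (measure_ne_top μ _) (hδ0 _)
    rw [← Bl_iUnion l, image_iUnion]
    exact Monotone.measure_iUnion fun m m' h => image_mono (Bl_mono l h)
  choose pick hpick using key
  let c : ℕ → List ℕ := fun k => Nat.rec [] (fun _ lk => lk ++ [pick lk]) k
  have hc : ∀ k, c (k + 1) = c k ++ [pick (c k)] := fun k => rfl
  set b : ℕ → ℕ := fun k => pick (c k) with hbdef
  have hlen : ∀ k, (c k).length = k := by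
    intro k
    induction k with
    | zero => rfl
    | succ k ih => rw [hc, List.length_append, ih]; rfl
  have hgetD : ∀ k i, i < k → (c k).getD i 0 = b i := by
    intro k
    induction k with
    | zero => omega
    | succ k ih =>
      intro i hi
      rw [hc]
      rcases lt_or_ge i k with h | h
      · rw [List.getD_append _ _ _ _ (by rw [hlen]; exact h)]
        exact ih i h
      · have : i = k := by omega
        subst this
        rw [List.getD_append_right _ _ _ _ (by rw [hlen]), hlen, Nat.sub_self]
        rfl
  have hBl : ∀ k, Bl (c k) = {σ : ℕ → ℕ | ∀ i < k, σ i ≤ b i} := by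
    intro k
    ext σ
    simp only [Bl, mem_setOf_eq, hlen]
    exact ⟨fun h i hi => (hgetD k i hi) ▸ h i hi, fun h i hi => (hgetD k i hi).symm ▸ h i hi⟩
  have hinv : ∀ k, μ (range f) ≤ μ (f '' Bl (c k)) + ∑ i ∈ Finset.range k, δ i := by
    intro k
    induction k with
    | zero => simp [c, Bl_nil, image_univ]
    | succ k ih =>
      calc μ (range f) ≤ μ (f '' Bl (c k)) + ∑ i ∈ Finset.range k, δ i := ih
        _ ≤ (μ (f '' Bl (c (k + 1))) + δ k) + ∑ i ∈ Finset.range k, δ i := by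
            gcongr
            have h := hpick (c k)
            rw [hlen k] at h
            rw [hc]
            exact h
        _ = μ (f '' Bl (c (k + 1))) + ∑ i ∈ Finset.range (k + 1), δ i := by
            rw [Finset.sum_range_succ]; ring
  set C : Set (ℕ → ℕ) := {σ : ℕ → ℕ | ∀ i, σ i ≤ b i} with hCdef
  have hCcomp : IsCompact C := by
    have : C = Set.pi univ fun i => Iic (b i) := by ext σ; simp [hCdef, Set.mem_pi, Pi.le_def]
    rw [this]; exact isCompact_univ_pi fun i => (Set.finite_Iic (b i)).isCompact
  refine ⟨f '' C, hCcomp.image fcont, image_subset_range _ _, ?_⟩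
  obtain ⟨U, hKU, hUopen, hU⟩ := Set.exists_isOpen_lt_add (f '' C) (measure_ne_top μ _) hε2
  have hCV : C ⊆ f ⁻¹' U := fun σ hσ => hKU (mem_image_of_mem f hσ)
  obtain ⟨k, hk⟩ := exists_subset_of_isOpen (hUopen.preimage fcont) hCV
  calc μ (range f) ≤ μ (f '' Bl (c k)) + ∑ i ∈ Finset.range k, δ i := hinv k
    _ ≤ μ U + ε / 2 := by
        refine add_le_add (measure_mono (image_subset_iff.2 ((hBl k).symm ▸ hk))) ?_
        simp only [hδdef]
        exact partial_geom _ _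
    _ ≤ (μ (f '' C) + ε / 2) + ε / 2 := add_le_add hU.le le_rfl
    _ = μ (f '' C) + ε := by rw [add_assoc, ENNReal.add_halves]

theorem AnalyticSet.nullMeasurableSet' {α : Type*} [TopologicalSpace α] [T2Space α]
    [MeasurableSpace α] [OpensMeasurableSpace α] {s : Set α} (hs : AnalyticSet s)
    (μ : Measure α) [IsFiniteMeasure μ] [μ.OuterRegular] : NullMeasurableSet s μ := by
  have h : ∀ n : ℕ, ∃ K, IsCompact K ∧ K ⊆ s ∧ μ s ≤ μ K + (n : ℝ≥0∞)⁻¹ := by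
    intro n
    exact analyticSet_exists_isCompact_le hs μ (ENNReal.inv_ne_zero.2 (ENNReal.natCast_ne_top n))
  choose K hK hKs hKle using h
  set T := ⋃ n, K n with hTdef
  have hTs : T ⊆ s := iUnion_subset hKs
  have hTmeas : MeasurableSet T :=
    MeasurableSet.iUnion fun n => (hK n).isClosed.measurableSet
  have hle : μ s ≤ μ T := by
    by_contra hcon
    push_neg at hcon
    have hη : μ s - μ T ≠ 0 := by
      simp only [ne_eq, tsub_eq_zero_iff_le, not_le]; exact hcon
    obtain ⟨n, hn⟩ := ENNReal.exists_inv_nat_lt hη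
    have h1 : μ s ≤ μ T + (n : ℝ≥0∞)⁻¹ :=
      le_trans (hKle n) (add_le_add (measure_mono (subset_iUnion K n)) le_rfl)
    have h2 : μ T + (n : ℝ≥0∞)⁻¹ < μ T + (μ s - μ T) :=
      ENNReal.add_lt_add_left (measure_ne_top μ T) hn
    rw [add_tsub_cancel_of_le hcon.le] at h2
    exact absurd (lt_of_le_of_lt h1 h2) (lt_irrefl _)
  have hnull : μ (toMeasurable μ s \ T) = 0 := by
    rw [measure_diff (hTs.trans (subset_toMeasurable μ s)) hTmeas.nullMeasurableSet
      (measure_ne_top μ T), measure_toMeasurable]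
    exact tsub_eq_zero_iff_le.2 hle
  have hsplit : s = T ∪ (s \ T) := (union_diff_cancel hTs).symm
  rw [hsplit]
  exact hTmeas.nullMeasurableSet.union
    (NullMeasurableSet.of_null (measure_mono_null
      (diff_subset_diff_left (subset_toMeasurable μ s)) hnull))

end CapAux2

lemma AnalyticSet.inter' {α : Type*} [TopologicalSpace α] [T2Space α] {s t : Set α}
    (hs : AnalyticSet s) (ht : AnalyticSet t) : AnalyticSet (s ∩ t) := by
  have h : AnalyticSet (⋂ b : Bool, bif b then s else t) :=
    AnalyticSet.iInter (by rintro (_ | _) <;> simpa)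
  have he : (⋂ b : Bool, bif b then s else t) = s ∩ t := by
    ext x; simp [Bool.forall_bool, and_comm]
  rwa [he] at h


/-- an open-valued set-valued map `Λ : X ⇉ ℝ^d` on a Polish space with
coanalytic graph has its graph in `ℬ_c(X) ⊗ ℬ(ℝ^d)`. -/
theorem graph_open_valued_coanalytic
    {d : ℕ} {X : Type*} [TopologicalSpace X] [PolishSpace X]
    [m : MeasurableSpace X] [BorelSpace X]
    (Λ : X → Set (EuclideanSpace ℝ (Fin d)))
    (hopen : ∀ x, IsOpen (Λ x))
    (hco : MeasureTheory.AnalyticSet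
      ({p : X × EuclideanSpace ℝ (Fin d) | p.2 ∈ Λ p.1}ᶜ)) :
    MeasurableSet[(universalCompletion X).prod
        (inferInstance : MeasurableSpace (EuclideanSpace ℝ (Fin d)))]
      {p : X × EuclideanSpace ℝ (Fin d) | p.2 ∈ Λ p.1} := by
  classical
  set G := {p : X × EuclideanSpace ℝ (Fin d) | p.2 ∈ Λ p.1} with hGdef
  obtain ⟨B, hBc, hBne, hBbasis⟩ := exists_countable_basis (EuclideanSpace ℝ (Fin d))
  obtain ⟨e, he⟩ := Set.Countable.exists_eq_range (hBc.insert ∅) ⟨∅, mem_insert _ _⟩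
  have heopen : ∀ n, IsOpen (e n) := by
    intro n
    have : e n ∈ insert (∅ : Set (EuclideanSpace ℝ (Fin d))) B := he ▸ mem_range_self n
    rcases this with h | h
    · rw [h]; exact isOpen_empty
    · exact hBbasis.isOpen h
  have hbasis : ∀ (y : EuclideanSpace ℝ (Fin d)) (V : Set (EuclideanSpace ℝ (Fin d))),
      IsOpen V → y ∈ V → ∃ n, y ∈ e n ∧ e n ⊆ V := by
    intro y V hV hy
    obtain ⟨v, hvB, hyv, hvV⟩ := hBbasis.exists_subset_of_mem_open hy hV
    have : v ∈ range e := he ▸ mem_insert_of_mem _ hvB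
    obtain ⟨n, rfl⟩ := this
    exact ⟨n, hyv, hvV⟩
  set S : ℕ → Set X := fun n => Prod.fst '' (Gᶜ ∩ ((univ : Set X) ×ˢ e n)) with hSdef
  have hSan : ∀ n, AnalyticSet (S n) := by
    intro n
    refine AnalyticSet.image_of_continuous ?_ continuous_fst
    refine AnalyticSet.inter' hco ?_
    exact (isOpen_univ.prod (heopen n)).measurableSet.analyticSet
  have key : G = ⋃ n, ((S n)ᶜ ×ˢ e n) := by
    ext ⟨x, y⟩
    simp only [mem_iUnion, mem_prod, mem_compl_iff]
    constructor
    · intro hxy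
      obtain ⟨n, hyn, hsub⟩ := hbasis y (Λ x) (hopen x) hxy
      refine ⟨n, fun hxS => ?_, hyn⟩
      obtain ⟨⟨x', y'⟩, ⟨hG', hy'⟩, hx'⟩ := hxS
      simp only at hx'
      subst hx'
      exact hG' (hsub hy'.2)
    · rintro ⟨n, hxS, hyn⟩
      by_contra hxy
      exact hxS ⟨(x, y), ⟨hxy, mem_univ _, hyn⟩, rfl⟩
  rw [key]
  refine MeasurableSet.iUnion fun n => ?_
  have hs : MeasurableSet[universalCompletion X] ((S n)ᶜ) := by
    intro P hP
    exact (CapAux2.AnalyticSet.nullMeasurableSet' (hSan n) P).compl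
  exact hs.prod (heopen n).measurableSet
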